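/- Let λ be a real algebraic number of degree n. Then there exists a matrix M ∈ Mₙ(ℚ) having λ as an eigenvalue with a right eigenvector v and a left eigenvector w such that all entries of v and w are strictly positive and wᵀv ≠ 0. -/

import Mathlib

open Matrix BigOperators Module

-- Part B step 1: existence of a real matrix in the good open set
lemma exists_real_good {n : ℕ} (hn : 0 < n) (v w : Fin n → ℝ) (hK : 0 < w ⬝ᵥ v) :
    ∃ G : Matrix (Fin n) (Fin n) ℝ,
      (∀ i, 0 < (G *ᵥ v) i) ∧ (∀ i, 0 < G.det * cramer Gᵀ w i) := by
  set K := w ⬝ᵥ v with hKdef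
  have hK0 : K ≠ 0 := ne_of_gt hK
  have hn0 : (n : ℝ) ≠ 0 := Nat.cast_ne_zero.mpr hn.ne'
  -- linear functionals
  set φ : (Fin n → ℝ) →ₗ[ℝ] ℝ :=
    { toFun := fun x => K⁻¹ * (w ⬝ᵥ x)
      map_add' := fun x y => by simp [dotProduct_add, mul_add]
      map_smul' := fun c x => by
        simp [dotProduct_smul, smul_eq_mul]; ring } with hφdef
  set ψ : (Fin n → ℝ) →ₗ[ℝ] ℝ :=
    { toFun := fun x => (n : ℝ)⁻¹ * ∑ i, x i
      map_add' := fun x y => by simp [Finset.sum_add_distrib, mul_add]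
      map_smul' := fun c x => by
        simp only [Pi.smul_apply, smul_eq_mul, RingHom.id_apply, Finset.mul_sum]
        exact Finset.sum_congr rfl fun i _ => by ring } with hψdef
  have hφv : φ v = 1 := by
    simp [hφdef]
    exact inv_mul_cancel₀ hK0
  have hψ1 : ψ (fun _ => (1:ℝ)) = 1 := by
    simp [hψdef]
    exact inv_mul_cancel₀ hn0
  -- kernels have the same finrank
  have frk : ∀ (f : (Fin n → ℝ) →ₗ[ℝ] ℝ), (∃ x, f x = 1) →
      finrank ℝ (LinearMap.ker f) = n - 1 := by
    intro f ⟨x, hx⟩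
    have hsurj : LinearMap.range f = ⊤ := by
      rw [LinearMap.range_eq_top]
      intro c
      exact ⟨c • x, by simp [hx]⟩
    have h1 := LinearMap.finrank_range_add_finrank_ker f
    rw [hsurj, finrank_top, finrank_self, Module.finrank_fin_fun] at h1
    omega
  have e₂ : (LinearMap.ker φ) ≃ₗ[ℝ] (LinearMap.ker ψ) :=
    LinearEquiv.ofFinrankEq _ _ (by rw [frk φ ⟨v, hφv⟩, frk ψ ⟨_, hψ1⟩])
  -- projection onto ker φ
  have hπmem : ∀ x, x - φ x • v ∈ LinearMap.ker φ := by
    intro x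
    simp [LinearMap.mem_ker, map_sub, _root_.map_smul, hφv, smul_eq_mul]
  set π : (Fin n → ℝ) →ₗ[ℝ] (LinearMap.ker φ) :=
    LinearMap.codRestrict (LinearMap.ker φ)
      (LinearMap.id - LinearMap.smulRight φ v) (fun x => by
        simpa using hπmem x) with hπdef
  set g : (Fin n → ℝ) →ₗ[ℝ] (Fin n → ℝ) :=
    LinearMap.smulRight φ (fun _ => (1:ℝ)) +
      (LinearMap.ker ψ).subtype ∘ₗ (e₂ : LinearMap.ker φ →ₗ[ℝ] LinearMap.ker ψ) ∘ₗ π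
    with hgdef
  have hgapp : ∀ x, g x = φ x • (fun _ => (1:ℝ)) + ((e₂ (π x) : LinearMap.ker ψ) : Fin n → ℝ) := by
    intro x; rfl
  have hπv : π v = 0 := by
    apply Subtype.ext
    simp [hπdef, LinearMap.codRestrict, hφv]
  have hgv : g v = fun _ => (1:ℝ) := by
    rw [hgapp, hπv]
    rw [hφv]
    simp
  have hψg : ∀ x, ψ (g x) = φ x := by
    intro x
    rw [hgapp, map_add, _root_.map_smul, hψ1]
    have : ψ ((e₂ (π x) : LinearMap.ker ψ) : Fin n → ℝ) = 0 := (e₂ (π x)).2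
    rw [this, smul_eq_mul]
    ring
  have hginj : Function.Injective g := by
    intro x y hxy
    have hsub : g (x - y) = 0 := by rw [map_sub, hxy, sub_self]
    have hφ0 : φ (x - y) = 0 := by rw [← hψg, hsub, map_zero]
    have h2 : ((e₂ (π (x - y)) : LinearMap.ker ψ) : Fin n → ℝ) = 0 := by
      have := hgapp (x - y)
      rw [hsub, hφ0, zero_smul, zero_add] at this
      exact this.symm
    have h3 : e₂ (π (x - y)) = 0 := Subtype.ext h2
    have h4 : π (x - y) = 0 := e₂.injective (by rw [h3, map_zero])
    have h5 : (x - y) - φ (x - y) • v = 0 := congrArg Subtype.val h4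
    rw [hφ0, zero_smul, sub_zero] at h5
    exact sub_eq_zero.mp h5
  -- the matrix
  set G : Matrix (Fin n) (Fin n) ℝ := LinearMap.toMatrix' g with hGdef
  have hGmul : ∀ x, G *ᵥ x = g x := by
    intro x
    rw [← Matrix.toLin'_apply, hGdef, Matrix.toLin'_toMatrix']
  have hgbij : Function.Bijective g :=
    ⟨hginj, (LinearMap.injective_iff_surjective).mp hginj⟩
  have hdet : G.det ≠ 0 := by
    rw [hGdef, LinearMap.det_toMatrix']
    exact (LinearEquiv.isUnit_det' (LinearEquiv.ofBijective g hgbij)).ne_zero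
  refine ⟨G, ?_, ?_⟩
  · intro i
    rw [hGmul, hgv]
    exact one_pos
  · -- cramer computation
    set y₀ : Fin n → ℝ := fun _ => K / n with hy₀def
    have hy₀G : y₀ ᵥ* G = w := by
      ext j
      have hcol : ∀ i : Fin n, G i j = g (Pi.single j 1) i := by
        intro i
        rw [hGdef, LinearMap.toMatrix'_apply]
      have hsum : ∑ i, G i j = (n : ℝ) * ψ (g (Pi.single j 1)) := by
        have : ψ (g (Pi.single j 1)) = (n:ℝ)⁻¹ * ∑ i, g (Pi.single j 1) i := rfl
        rw [this, ← mul_assoc, mul_inv_cancel₀ hn0, one_mul]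
        exact Finset.sum_congr rfl fun i _ => hcol i
      have hφs : φ (Pi.single j 1) = K⁻¹ * w j := by
        have : φ (Pi.single j 1) = K⁻¹ * (w ⬝ᵥ Pi.single j 1) := rfl
        rw [this, dotProduct_single, mul_one]
      have happ : (y₀ ᵥ* G) j = ∑ i, (K / n) * G i j := rfl
      rw [happ, ← Finset.mul_sum, hsum, hψg, hφs]
      field_simp
    intro i
    have hcr : cramer Gᵀ w = G.det • y₀ := by
      have h1 : Gᵀ *ᵥ cramer Gᵀ w = Gᵀ.det • w := Matrix.mulVec_cramer Gᵀ w
      have h2 : Gᵀ *ᵥ (G.det • y₀) = G.det • w := by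
        rw [Matrix.mulVec_smul, Matrix.mulVec_transpose, hy₀G]
      have hdt : Gᵀ.det = G.det := Matrix.det_transpose G
      have hunit : IsUnit Gᵀ.det := isUnit_iff_ne_zero.mpr (by rw [hdt]; exact hdet)
      have hinj : Function.Injective (Gᵀ.mulVec) :=
        Matrix.mulVec_injective_iff_isUnit.mpr ((Matrix.isUnit_iff_isUnit_det Gᵀ).mpr hunit)
      apply hinj
      rw [h1, h2, hdt]
    have hcri : cramer Gᵀ w i = G.det * (K / n) := by rw [hcr]; rfl
    rw [hcri, ← mul_assoc]
    exact mul_pos (mul_self_pos.mpr hdet) (div_pos hK (Nat.cast_pos.mpr hn))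

attribute [local instance] Matrix.normedAddCommGroup in
lemma exists_conj {n : ℕ} (hn : 0 < n) (v w : Fin n → ℝ) (hK : 0 < w ⬝ᵥ v) :
    ∃ P Q : Matrix (Fin n) (Fin n) ℚ, P * Q = 1 ∧ Q * P = 1 ∧
      (∀ i, 0 < ((P.map (Rat.cast : ℚ → ℝ)) *ᵥ v) i) ∧
      (∀ i, 0 < (w ᵥ* (Q.map (Rat.cast : ℚ → ℝ))) i) := by
  obtain ⟨G, hG1, hG2⟩ := exists_real_good hn v w hK
  set S : Set (Matrix (Fin n) (Fin n) ℝ) :=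
    {R | (∀ i, 0 < (R *ᵥ v) i) ∧ ∀ i, 0 < R.det * cramer Rᵀ w i} with hSdef
  have hopen : IsOpen S := by
    have h1 : IsOpen {R : Matrix (Fin n) (Fin n) ℝ | ∀ i, 0 < (R *ᵥ v) i} := by
      rw [Set.setOf_forall]
      refine isOpen_iInter_of_finite fun i => ?_
      exact isOpen_lt continuous_const
        ((continuous_apply i).comp (continuous_id.matrix_mulVec continuous_const))
    have h2 : IsOpen {R : Matrix (Fin n) (Fin n) ℝ | ∀ i, 0 < R.det * cramer Rᵀ w i} := by
      rw [Set.setOf_forall]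
      refine isOpen_iInter_of_finite fun i => ?_
      exact isOpen_lt continuous_const
        ((continuous_id.matrix_det).mul
          ((continuous_apply i).comp
            ((continuous_id.matrix_transpose).matrix_cramer continuous_const)))
    rw [hSdef, Set.setOf_and]
    exact h1.inter h2
  have hGS : G ∈ S := ⟨hG1, hG2⟩
  obtain ⟨ε, hε, hball⟩ := Metric.isOpen_iff.mp hopen G hGS
  have hq : ∀ i j : Fin n, ∃ q : ℚ, |G i j - (q:ℝ)| < ε/2 := fun i j =>
    exists_rat_near _ (half_pos hε)
  choose P hP using hq
  set Pq : Matrix (Fin n) (Fin n) ℚ := Matrix.of P with hPqdef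
  set Pr : Matrix (Fin n) (Fin n) ℝ := Pq.map (Rat.cast : ℚ → ℝ) with hPrdef
  have hPS : Pr ∈ S := by
    apply hball
    rw [Metric.mem_ball]
    refine (dist_pi_lt_iff hε).mpr ?_
    intro i
    rw [dist_pi_lt_iff hε]
    intro j
    rw [Real.dist_eq]
    have : Pr i j = ((P i j : ℚ) : ℝ) := rfl
    rw [this, abs_sub_comm]
    exact lt_trans (hP i j) (half_lt_self hε)
  have hdet_cast : Pr.det = ((Pq.det : ℚ) : ℝ) := by
    rw [hPrdef]
    exact ((Rat.castHom ℝ).map_det Pq).symm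
  have i0 : Fin n := ⟨0, hn⟩
  have hdetPr : Pr.det ≠ 0 := by
    intro h
    have := hPS.2 i0
    rw [h, zero_mul] at this
    exact lt_irrefl 0 this
  have hdetPq : IsUnit Pq.det := by
    rw [isUnit_iff_ne_zero]
    intro h
    apply hdetPr
    rw [hdet_cast, h]
    exact Rat.cast_zero
  set Q : Matrix (Fin n) (Fin n) ℚ := Pq⁻¹ with hQdef
  have hPQ : Pq * Q = 1 := Matrix.mul_nonsing_inv Pq hdetPq
  have hQP : Q * Pq = 1 := Matrix.nonsing_inv_mul Pq hdetPq
  have hPQr : Pr * Q.map (Rat.cast : ℚ → ℝ) = 1 := by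
    have := congrArg (fun X : Matrix (Fin n) (Fin n) ℚ =>
      X.map ((Rat.castHom ℝ) : ℚ → ℝ)) hPQ
    rw [hPrdef]
    have hmm : (Pq * Q).map (Rat.cast : ℚ → ℝ) =
        Pq.map (Rat.cast : ℚ → ℝ) * Q.map (Rat.cast : ℚ → ℝ) :=
      Matrix.map_mul (f := Rat.castHom ℝ)
    rw [← hmm, hPQ]
    exact Matrix.map_one _ Rat.cast_zero Rat.cast_one
  set y : Fin n → ℝ := fun i => Pr.det⁻¹ * cramer Prᵀ w i with hydef
  have hyP : y ᵥ* Pr = w := by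
    have h0 : y = Pr.det⁻¹ • cramer Prᵀ w := rfl
    rw [← Matrix.mulVec_transpose, h0, Matrix.mulVec_smul, Matrix.mulVec_cramer,
      Matrix.det_transpose, smul_smul, inv_mul_cancel₀ hdetPr, one_smul]
  have hwQ : w ᵥ* Q.map (Rat.cast : ℚ → ℝ) = y := by
    rw [← hyP, Matrix.vecMul_vecMul, hPQr, Matrix.vecMul_one]
  refine ⟨Pq, Q, hPQ, hQP, fun i => hPS.1 i, fun i => ?_⟩
  rw [hwQ]
  have h := hPS.2 i
  have h2 : y i = (Pr.det * cramer Prᵀ w i) / (Pr.det * Pr.det) := by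
    rw [hydef]
    field_simp
  rw [h2]
  exact div_pos h (mul_self_pos.mpr hdetPr)

open Polynomial

lemma sum_sum_shift (g : ℕ → ℝ) (N : ℕ) :
    ∑ j ∈ Finset.range N, ∑ k ∈ Finset.range (N - j), g (j + k)
      = ∑ m ∈ Finset.range N, ((m : ℝ) + 1) * g m := by
  induction N with
  | zero => simp
  | succ N ih =>
    rw [Finset.sum_range_succ, Finset.sum_range_succ]
    have hlast : ∑ k ∈ Finset.range (N + 1 - N), g (N + k) = g N := by
      have : N + 1 - N = 1 := by omega
      rw [this, Finset.sum_range_one, Nat.add_zero]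
    rw [hlast]
    have hsplit : ∀ j ∈ Finset.range N,
        ∑ k ∈ Finset.range (N + 1 - j), g (j + k)
          = (∑ k ∈ Finset.range (N - j), g (j + k)) + g N := by
      intro j hj
      have hj' : j < N := Finset.mem_range.mp hj
      have h1 : N + 1 - j = (N - j) + 1 := by omega
      rw [h1, Finset.sum_range_succ]
      congr 2
      omega
    rw [Finset.sum_congr rfl hsplit, Finset.sum_add_distrib, ih, Finset.sum_const,
      Finset.card_range, nsmul_eq_mul]
    push_cast
    ring

lemma exists_companion_eigen (lam : ℝ) (halg : IsAlgebraic ℚ lam)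
    (n : ℕ) (hn : n = (minpoly ℚ lam).natDegree) :
    ∃ (M0 : Matrix (Fin n) (Fin n) ℚ) (v w : Fin n → ℝ),
      (M0.map (Rat.cast : ℚ → ℝ)) *ᵥ v = lam • v ∧
      w ᵥ* (M0.map (Rat.cast : ℚ → ℝ)) = lam • w ∧
      w ⬝ᵥ v ≠ 0 := by
  set p : Polynomial ℚ := minpoly ℚ lam with hp
  have hint : IsIntegral ℚ lam := halg.isIntegral
  have hnpos : 0 < n := hn ▸ minpoly.natDegree_pos hint
  have hmon : p.Monic := minpoly.monic hint
  have hp0 : p ≠ 0 := hmon.ne_zero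
  set c : ℕ → ℝ := fun k => ((p.coeff k : ℚ) : ℝ) with hc
  have hcn : c n = 1 := by
    rw [hc]
    simp only [hn]
    rw [hmon.coeff_natDegree, Rat.cast_one]
  have haev : ∑ i ∈ Finset.range (n + 1), c i * lam ^ i = 0 := by
    have h := minpoly.aeval ℚ lam
    rw [Polynomial.aeval_eq_sum_range] at h
    rw [← hp, ← hn] at h
    rw [← h]
    exact Finset.sum_congr rfl fun i _ => by rw [Rat.smul_def]
  have hlamn : lam ^ n = -∑ i ∈ Finset.range n, c i * lam ^ i := by
    have h := haev
    rw [Finset.sum_range_succ, hcn, one_mul] at h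
    linarith
  set M0 : Matrix (Fin n) (Fin n) ℚ := Matrix.of fun i j =>
    if (i : ℕ) + 1 = n then -p.coeff (j : ℕ)
    else if (j : ℕ) = (i : ℕ) + 1 then 1 else 0 with hM0
  set Mr : Matrix (Fin n) (Fin n) ℝ := M0.map (Rat.cast : ℚ → ℝ) with hMrdef
  have hMr : ∀ i j : Fin n, Mr i j =
      if (i : ℕ) + 1 = n then -(c (j : ℕ))
      else if (j : ℕ) = (i : ℕ) + 1 then 1 else 0 := by
    intro i j
    rw [hMrdef, Matrix.map_apply, hM0]
    simp only [Matrix.of_apply, apply_ite (Rat.cast : ℚ → ℝ), Rat.cast_neg,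
      Rat.cast_one, Rat.cast_zero]
    rfl
  set v : Fin n → ℝ := fun i => lam ^ (i : ℕ) with hv
  set w : Fin n → ℝ := fun j =>
    ∑ k ∈ Finset.range (n - (j : ℕ)), c ((j : ℕ) + 1 + k) * lam ^ k with hw
  have hright : Mr *ᵥ v = lam • v := by
    funext i
    have happ : (Mr *ᵥ v) i = ∑ j, Mr i j * v j := rfl
    have hsmul : (lam • v) i = lam * lam ^ (i : ℕ) := rfl
    rw [happ, hsmul]
    by_cases hi : (i : ℕ) + 1 = n
    · have hsum : ∑ j : Fin n, Mr i j * v j = -∑ j : Fin n, c (j : ℕ) * lam ^ (j : ℕ) := by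
        rw [← Finset.sum_neg_distrib]
        refine Finset.sum_congr rfl fun j _ => ?_
        rw [hMr, if_pos hi]
        have : v j = lam ^ (j : ℕ) := rfl
        rw [this]
        ring
      rw [hsum, Fin.sum_univ_eq_sum_range (fun j => c j * lam ^ j) n, ← hlamn,
        ← pow_succ', hi]
    · have hi2 : (i : ℕ) + 1 < n := lt_of_le_of_ne i.isLt hi
      set j₀ : Fin n := ⟨(i : ℕ) + 1, hi2⟩ with hj₀
      have hsum : ∑ j : Fin n, Mr i j * v j = ∑ j : Fin n, if j = j₀ then v j else 0 := by
        refine Finset.sum_congr rfl fun j _ => ?_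
        rw [hMr, if_neg hi]
        have hcond : (j : ℕ) = (i : ℕ) + 1 ↔ j = j₀ := by
          simp [hj₀, Fin.ext_iff]
        by_cases hjj : j = j₀
        · rw [if_pos (hcond.mpr hjj), if_pos hjj, one_mul]
        · rw [if_neg (fun h => hjj (hcond.mp h)), if_neg hjj, zero_mul]
      rw [hsum, Finset.sum_ite_eq' Finset.univ j₀ v, if_pos (Finset.mem_univ j₀)]
      have : v j₀ = lam ^ ((i : ℕ) + 1) := rfl
      rw [this, pow_succ']
  have hleft : w ᵥ* Mr = lam • w := by
    funext j
    have happ : (w ᵥ* Mr) j = ∑ i, w i * Mr i j := rfl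
    have hsmul : (lam • w) j = lam * w j := rfl
    rw [happ, hsmul]
    set iN : Fin n := ⟨n - 1, by omega⟩ with hiN
    have hiN1 : (iN : ℕ) + 1 = n := by
      simp [hiN]
      omega
    have hwiN : w iN = 1 := by
      rw [hw]
      simp only
      have h1 : n - ((iN : ℕ)) = 1 := by simp [hiN]; omega
      rw [h1, Finset.sum_range_one, pow_zero, mul_one]
      have h2 : (iN : ℕ) + 1 + 0 = n := by omega
      rw [h2, hcn]
    have hsplit : ∑ i : Fin n, w i * Mr i j
        = w iN * Mr iN j + ∑ i ∈ Finset.univ.erase iN, w i * Mr i j :=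
      (Finset.add_sum_erase Finset.univ (fun i => w i * Mr i j) (Finset.mem_univ iN)).symm
    have hterm : w iN * Mr iN j = -(c (j : ℕ)) := by
      rw [hMr, if_pos hiN1, hwiN, one_mul]
    have herase : ∀ i ∈ Finset.univ.erase iN,
        w i * Mr i j = if (j : ℕ) = (i : ℕ) + 1 then w i else 0 := by
      intro i hi
      have hine : i ≠ iN := (Finset.mem_erase.mp hi).1
      have hi1 : (i : ℕ) + 1 ≠ n := by
        intro h
        apply hine
        apply Fin.ext
        simp [hiN]
        omega
      rw [hMr, if_neg hi1]
      split <;> ring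
    rw [hsplit, hterm, Finset.sum_congr rfl herase]
    by_cases hj : (j : ℕ) = 0
    · have hzero : ∑ i ∈ Finset.univ.erase iN,
          (if (j : ℕ) = (i : ℕ) + 1 then w i else 0) = 0 := by
        refine Finset.sum_eq_zero fun i _ => ?_
        rw [if_neg (by omega)]
      rw [hzero, add_zero]
      have hwj : w j = ∑ k ∈ Finset.range n, c (k + 1) * lam ^ k := by
        rw [hw]
        simp only
        rw [hj]
        refine Finset.sum_congr (by rw [Nat.sub_zero]) fun k _ => by
          rw [Nat.zero_add, Nat.add_comm 1 k]
      have hmul : lam * w j = ∑ k ∈ Finset.range n, c (k + 1) * lam ^ (k + 1) := by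
        rw [hwj, Finset.mul_sum]
        exact Finset.sum_congr rfl fun k _ => by ring
      have h0 := haev
      rw [Finset.sum_range_succ' (fun i => c i * lam ^ i) n] at h0
      simp only [pow_zero, mul_one] at h0
      rw [hmul, hj]
      linarith
    · have hj1 : 0 < (j : ℕ) := Nat.pos_of_ne_zero hj
      set j₁ : Fin n := ⟨(j : ℕ) - 1, by omega⟩ with hj₁
      have hj₁v : (j₁ : ℕ) = (j : ℕ) - 1 := rfl
      have hsum1 : ∑ i ∈ Finset.univ.erase iN,
          (if (j : ℕ) = (i : ℕ) + 1 then w i else 0) = w j₁ := by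
        have hmem : j₁ ∈ Finset.univ.erase iN := by
          rw [Finset.mem_erase]
          refine ⟨?_, Finset.mem_univ _⟩
          intro h
          have : (j₁ : ℕ) = n - 1 := by rw [h]
          omega
        rw [Finset.sum_eq_single_of_mem j₁ hmem]
        · rw [if_pos (by omega)]
        · intro i _ hine
          rw [if_neg]
          intro h
          apply hine
          apply Fin.ext
          omega
      rw [hsum1]
      have hwj₁ : w j₁ = (∑ k ∈ Finset.range (n - (j : ℕ)), c ((j : ℕ) + k + 1) * lam ^ (k + 1))
          + c (j : ℕ) := by
        rw [hw]
        simp only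
        have h1 : n - (j₁ : ℕ) = (n - (j : ℕ)) + 1 := by omega
        rw [h1, Finset.sum_range_succ' (fun k => c ((j₁ : ℕ) + 1 + k) * lam ^ k) (n - (j : ℕ))]
        simp only [pow_zero, mul_one]
        congr 1
        · refine Finset.sum_congr rfl fun k _ => ?_
          congr 2
          omega
        · congr 1
          omega
      have hmul : lam * w j = ∑ k ∈ Finset.range (n - (j : ℕ)), c ((j : ℕ) + k + 1) * lam ^ (k + 1) := by
        rw [hw]
        simp only
        rw [Finset.mul_sum]
        refine Finset.sum_congr rfl fun k _ => ?_
        have : (j : ℕ) + 1 + k = (j : ℕ) + k + 1 := by omega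
        rw [this]
        ring
      rw [hwj₁, hmul]
      ring
  have hwv : w ⬝ᵥ v = Polynomial.aeval lam (Polynomial.derivative p) := by
    have h1 : w ⬝ᵥ v = ∑ j ∈ Finset.range n,
        ∑ k ∈ Finset.range (n - j), c (j + 1 + k) * lam ^ k * lam ^ j := by
      rw [dotProduct]
      rw [Fin.sum_univ_eq_sum_range
        (fun j => (∑ k ∈ Finset.range (n - j), c (j + 1 + k) * lam ^ k) * lam ^ j) n]
      exact Finset.sum_congr rfl fun j _ => by rw [Finset.sum_mul]
    have h2 : w ⬝ᵥ v = ∑ j ∈ Finset.range n,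
        ∑ k ∈ Finset.range (n - j), (fun m => c (m + 1) * lam ^ m) (j + k) := by
      rw [h1]
      refine Finset.sum_congr rfl fun j hj => Finset.sum_congr rfl fun k hk => ?_
      simp only
      have he : j + 1 + k = (j + k) + 1 := by omega
      rw [he, pow_add]
      ring
    rw [h2, sum_sum_shift (fun m => c (m + 1) * lam ^ m) n]
    have hd : (Polynomial.derivative p).natDegree < n := by
      rw [hn]
      exact Polynomial.natDegree_derivative_lt (by omega)
    rw [Polynomial.aeval_eq_sum_range' hd]
    refine Finset.sum_congr rfl fun m _ => ?_
    rw [Polynomial.coeff_derivative, Rat.smul_def]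
    push_cast
    ring
  have hne : Polynomial.aeval lam (Polynomial.derivative p) ≠ 0 := by
    have hirr : Irreducible p := minpoly.irreducible hint
    have hsep : p.Separable := hirr.separable
    obtain ⟨a, b, hab⟩ := hsep
    intro h
    have h2 := congrArg (Polynomial.aeval lam) hab
    rw [map_add, _root_.map_mul, _root_.map_mul, _root_.map_one] at h2
    rw [h, mul_zero] at h2
    have h3 : (Polynomial.aeval lam) p = 0 := by rw [hp]; exact minpoly.aeval ℚ lam
    rw [h3, mul_zero, add_zero] at h2
    exact zero_ne_one h2
  exact ⟨M0, v, w, hright, hleft, by rw [hwv]; exact hne⟩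

/-- for a real algebraic number `λ` of degree `n`, there is a rational
`n × n` matrix with `λ` as an eigenvalue, whose corresponding right and left
eigenvectors can be taken entrywise positive and non-orthogonal. -/
theorem robust_coin_flipping_stmt6
    (lam : ℝ) (halg : IsAlgebraic ℚ lam)
    (n : ℕ) (hn : n = (minpoly ℚ lam).natDegree) :
    ∃ (M : Matrix (Fin n) (Fin n) ℚ) (v w : Fin n → ℝ),
      (M.map (Rat.cast : ℚ → ℝ)).mulVec v = lam • v ∧
      (M.map (Rat.cast : ℚ → ℝ)).vecMul w = lam • w ∧
      (∀ i, 0 < v i) ∧ (∀ i, 0 < w i) ∧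
      w ⬝ᵥ v ≠ 0 := by
  obtain ⟨M0, v, w0, hr, hl, hwv⟩ := exists_companion_eigen lam halg n hn
  have hnpos : 0 < n := hn ▸ minpoly.natDegree_pos halg.isIntegral
  set M0r : Matrix (Fin n) (Fin n) ℝ := M0.map (Rat.cast : ℚ → ℝ) with hM0r
  obtain ⟨w1, hl1, hKpos⟩ : ∃ w1, w1 ᵥ* M0r = lam • w1 ∧ 0 < w1 ⬝ᵥ v := by
    rcases hwv.lt_or_gt with hneg | hpos
    · refine ⟨-w0, ?_, ?_⟩
      · rw [Matrix.neg_vecMul, hl, smul_neg]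
      · rwa [neg_dotProduct, neg_pos]
    · exact ⟨w0, hl, hpos⟩
  obtain ⟨P, Q, hPQ, hQP, hv', hw'⟩ := exists_conj hnpos v w1 hKpos
  set Pr : Matrix (Fin n) (Fin n) ℝ := P.map (Rat.cast : ℚ → ℝ) with hPr
  set Qr : Matrix (Fin n) (Fin n) ℝ := Q.map (Rat.cast : ℚ → ℝ) with hQr
  have hmapmul : ∀ A B : Matrix (Fin n) (Fin n) ℚ,
      (A * B).map (Rat.cast : ℚ → ℝ) = A.map (Rat.cast : ℚ → ℝ) * B.map (Rat.cast : ℚ → ℝ) :=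
    fun A B => Matrix.map_mul (f := Rat.castHom ℝ)
  have hPQr : Pr * Qr = 1 := by
    rw [hPr, hQr, ← hmapmul, hPQ]
    exact Matrix.map_one _ Rat.cast_zero Rat.cast_one
  have hQPr : Qr * Pr = 1 := by
    rw [hPr, hQr, ← hmapmul, hQP]
    exact Matrix.map_one _ Rat.cast_zero Rat.cast_one
  refine ⟨P * M0 * Q, Pr *ᵥ v, w1 ᵥ* Qr, ?_, ?_, hv', hw', ?_⟩
  · show ((P * M0 * Q).map (Rat.cast : ℚ → ℝ)) *ᵥ (Pr *ᵥ v) = lam • (Pr *ᵥ v)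
    rw [hmapmul, hmapmul, ← hPr, ← hQr, ← hM0r]
    rw [Matrix.mulVec_mulVec, mul_assoc (Pr * M0r) Qr Pr, hQPr, mul_one,
      ← Matrix.mulVec_mulVec, hr, Matrix.mulVec_smul]
  · show (w1 ᵥ* Qr) ᵥ* ((P * M0 * Q).map (Rat.cast : ℚ → ℝ)) = lam • (w1 ᵥ* Qr)
    rw [hmapmul, hmapmul, ← hPr, ← hQr, ← hM0r]
    rw [Matrix.vecMul_vecMul]
    have hassoc : Qr * (Pr * M0r * Qr) = M0r * Qr := by
      rw [← mul_assoc, ← mul_assoc, hQPr, one_mul]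
    rw [hassoc, ← Matrix.vecMul_vecMul, hl1, Matrix.smul_vecMul]
  · show (w1 ᵥ* Qr) ⬝ᵥ (Pr *ᵥ v) ≠ 0
    rw [Matrix.dotProduct_mulVec, Matrix.vecMul_vecMul, hQPr, Matrix.vecMul_one]
    exact ne_of_gt hKpos
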